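/- Let A : H → 2^H be maximally monotone, Γ ∈ 𝔖₊₊(H) such that A = P_{H₁}AP_{H₁} and Γ(H₁) ⊆ H₁, and W ∈ 𝔖₊(H) with ker W = H₁^⊥, W|_{H₁} strongly positive, commuting with Γ. Then for x ∈ H and z ∈ H₁, the condition W(x − ΓBx − z) ∈ ΓAx is equivalent to P_{H₁}x = J_{W^{-1}ΓA}(P_{H₁}(2x − ΓBx) − z), where J_{W^{-1}ΓA} is the resolvent of W^{-1}ΓA restricted to H₁. -/

import Mathlib

open RealInnerProductSpace

def IsMonotoneOp {H : Type*} [NormedAddCommGroup H] [InnerProductSpace ℝ H]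
    (A : H → Set H) : Prop :=
  ∀ ⦃x u y v⦄, u ∈ A x → v ∈ A y → 0 ≤ ⟪u - v, x - y⟫

def IsMaxMonotoneOp {H : Type*} [NormedAddCommGroup H] [InnerProductSpace ℝ H]
    (A : H → Set H) : Prop :=
  IsMonotoneOp A ∧ ∀ x u, (∀ y v, v ∈ A y → 0 ≤ ⟪u - v, x - y⟫) → u ∈ A x

/-- the coordinate-wise fixed-point characterization of the
preconditioned forward-Douglas–Rachford: for x ∈ H and z ∈ H₁,
`W(x − ΓBx − z) ∈ ΓAx` is equivalent to
`P_{H₁}x = J_{W⁻¹ΓA}(P_{H₁}(2x − ΓBx) − z)`. -/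
theorem coordinatewise_fixed_point_characterization
    {H : Type*} [NormedAddCommGroup H] [InnerProductSpace ℝ H] [CompleteSpace H]
    (H₁ : Submodule ℝ H) [CompleteSpace H₁]
    (A : H → Set H) (hA : IsMaxMonotoneOp A)
    (hA1 : ∀ x : H, A x =
      (fun u => (Submodule.orthogonalProjectionOnto H₁ u : H)) ''
        A ((Submodule.orthogonalProjectionOnto H₁ x : H)))
    (B : H → H)
    (Γ : H →L[ℝ] H) (hΓsa : IsSelfAdjoint Γ)
    (hΓpos : ∃ c : ℝ, 0 < c ∧ ∀ x, c * ‖x‖ ^ 2 ≤ ⟪Γ x, x⟫)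
    (hΓH : ∀ x ∈ H₁, Γ x ∈ H₁)
    (W : H →L[ℝ] H) (hWsa : IsSelfAdjoint W)
    (hWpos : ∀ x, 0 ≤ ⟪W x, x⟫)
    (hker : LinearMap.ker (W : H →ₗ[ℝ] H) = H₁ᗮ)
    (hWstrong : ∃ c : ℝ, 0 < c ∧ ∀ x ∈ H₁, c * ‖x‖ ^ 2 ≤ ⟪W x, x⟫)
    (hcomm : ∀ x, Γ (W x) = W (Γ x))
    (J : H → H)
    (hJ : ∀ p ξ, J p = ξ ↔ ξ ∈ H₁ ∧ ∃ a ∈ A ξ, W (p - ξ) = Γ a)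
    (x : H) (z : H) (hz : z ∈ H₁) :
    (∃ a ∈ A x, W (x - Γ (B x) - z) = Γ a) ↔
    (Submodule.orthogonalProjectionOnto H₁ x : H) =
      J ((Submodule.orthogonalProjectionOnto H₁ (2 • x - Γ (B x)) : H) - z) := by
  have hWP : ∀ y : H, W ((Submodule.orthogonalProjectionOnto H₁ y : H)) = W y := by
    intro y
    have h : y - (Submodule.orthogonalProjectionOnto H₁ y : H) ∈ LinearMap.ker (W : H →ₗ[ℝ] H) := by
      rw [hker]; exact Submodule.sub_starProjection_mem_orthogonal (K := H₁) y
    have h2 : W (y - (Submodule.orthogonalProjectionOnto H₁ y : H)) = 0 := h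
    rw [map_sub, sub_eq_zero] at h2
    exact h2.symm
  have hAA : A ((Submodule.orthogonalProjectionOnto H₁ x : H)) = A x := by
    conv_lhs => rw [hA1, Submodule.orthogonalProjectionOnto_mem_subspace_eq_self]
    exact (hA1 x).symm
  have key : W (((Submodule.orthogonalProjectionOnto H₁ (2 • x - Γ (B x)) : H) - z) -
      (Submodule.orthogonalProjectionOnto H₁ x : H)) = W (x - Γ (B x) - z) := by
    rw [map_sub, map_sub, hWP, hWP, ← map_sub, ← map_sub]
    congr 1
    abel
  constructor
  · rintro ⟨a, ha, hWa⟩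
    symm
    rw [hJ]
    exact ⟨SetLike.coe_mem _, a, hAA ▸ ha, key.trans hWa⟩
  · intro h
    obtain ⟨-, a, ha, hWeq⟩ := (hJ _ _).mp h.symm
    exact ⟨a, hAA ▸ ha, key.symm.trans hWeq⟩
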